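/- Let d ∈ ℕ and 0 < σ₀ ≤ Σ. For all real d×d matrices A, Â satisfying 2σ₀²·I ⪯ A·Aᵀ ⪯ 2Σ²·I and 2σ₀²·I ⪯ Â·Âᵀ ⪯ 2Σ²·I, one has ‖(A·Aᵀ − σ₀²·I)^{1/2} − (Â·Âᵀ − σ₀²·I)^{1/2}‖_F ≤ (2Σ/σ₀)·‖A − Â‖_F, where M^{1/2} denotes the (unique) positive semidefinite square root of a positive semidefinite matrix M. In particular, if σ : ℝᵈ → ℝ^{d×d} is Lipschitz (with constant L in Frobenius norm) and satisfies 2σ₀²·I ⪯ σ(x)σ(x)ᵀ ⪯ 2Σ²·I for all x, then the map σ̄(x) = (σ(x)σ(x)ᵀ − σ₀²·I)^{1/2} is Lipschitz in Frobenius norm with constant (2Σ/σ₀)·L. -/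

import Mathlib

open Matrix

noncomputable section

/-- Frobenius norm of a real square matrix. -/
def frobNorm {d : ℕ} (A : Matrix (Fin d) (Fin d) ℝ) : ℝ :=
  Real.sqrt (∑ i, ∑ j, (A i j) ^ 2)

/-- Loewner order: `A ⪯ B` iff `B − A` is positive semidefinite. -/
def loewnerLE {d : ℕ} (A B : Matrix (Fin d) (Fin d) ℝ) : Prop := (B - A).PosSemidef

namespace Stmt9Aux

variable {d : ℕ}

local notation "Mat" => Matrix (Fin d) (Fin d) ℝ

lemma frob_nonneg (A : Mat) : 0 ≤ frobNorm A := Real.sqrt_nonneg _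

lemma trace_transpose_mul (A B : Mat) :
    (Aᵀ * B).trace = ∑ i, ∑ j, A i j * B i j := by
  rw [Finset.sum_comm]
  simp [Matrix.trace, Matrix.diag, Matrix.mul_apply]

lemma frob_sq (A : Mat) : frobNorm A ^ 2 = (Aᵀ * A).trace := by
  rw [trace_transpose_mul, frobNorm, Real.sq_sqrt]
  · simp [sq]
  · exact Finset.sum_nonneg fun i _ => Finset.sum_nonneg fun j _ => sq_nonneg _

lemma frob_transpose (A : Mat) : frobNorm Aᵀ = frobNorm A := by
  unfold frobNorm
  rw [Finset.sum_comm]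
  simp

lemma trace_le_frob_mul_frob (A B : Mat) :
    (Aᵀ * B).trace ≤ frobNorm A * frobNorm B := by
  rw [trace_transpose_mul]
  have h := Real.sum_mul_le_sqrt_mul_sqrt (Finset.univ : Finset (Fin d × Fin d))
    (fun p => A p.1 p.2) (fun p => B p.1 p.2)
  simpa [Fintype.sum_prod_type, frobNorm] using h

lemma trace_nonneg_of_psd {X : Mat} (hX : X.PosSemidef) : 0 ≤ X.trace := by
  exact hX.trace_nonneg

lemma conjT_eq_T (A : Mat) : Aᴴ = Aᵀ := Matrix.conjTranspose_eq_transpose_of_trivial A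

lemma trace_sandwich_nonneg {X : Mat} (hX : X.PosSemidef) (E : Mat) :
    0 ≤ (E * X * Eᵀ).trace := by
  have := hX.mul_mul_conjTranspose_same E
  rw [conjT_eq_T] at this
  exact trace_nonneg_of_psd this

lemma trace_sandwich_le {X : Mat} {c : ℝ} (hXc : (c • (1 : Mat) - X).PosSemidef) (E : Mat) :
    (E * X * Eᵀ).trace ≤ c * (E * Eᵀ).trace := by
  have h0 := trace_sandwich_nonneg hXc E
  have hexp : E * (c • (1 : Mat) - X) * Eᵀ = c • (E * Eᵀ) - E * X * Eᵀ := by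
    rw [Matrix.mul_sub, Matrix.sub_mul]
    congr 1
    rw [mul_smul_comm, Matrix.mul_one, smul_mul_assoc]
  rw [hexp, Matrix.trace_sub, Matrix.trace_smul, smul_eq_mul, sub_nonneg] at h0
  exact h0

lemma dot_self_nonneg (v : Fin d → ℝ) : 0 ≤ v ⬝ᵥ v :=
  Finset.sum_nonneg fun i _ => mul_self_nonneg _

/-- AAᵀ ⪯ c I implies AᵀA ⪯ c I. -/
lemma transpose_loewner {A : Mat} {c : ℝ} (hc : 0 ≤ c)
    (h : (c • (1 : Mat) - A * Aᵀ).PosSemidef) :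
    (c • (1 : Mat) - Aᵀ * A).PosSemidef := by
  refine Matrix.PosSemidef.of_dotProduct_mulVec_nonneg ?_ ?_
  · simp [Matrix.IsHermitian, conjTranspose_sub, conjTranspose_smul, conjTranspose_mul,
      conjT_eq_T, Matrix.transpose_transpose]
  · intro x
    have hq : ∀ y : Fin d → ℝ, star y ⬝ᵥ ((c • (1 : Mat) - A * Aᵀ) *ᵥ y)
        = c * (y ⬝ᵥ y) - (Aᵀ *ᵥ y) ⬝ᵥ (Aᵀ *ᵥ y) := by
      intro y
      rw [Matrix.sub_mulVec, dotProduct_sub]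
      congr 1
      · rw [Matrix.smul_mulVec, Matrix.one_mulVec, dotProduct_smul, smul_eq_mul,
          star_trivial]
      · rw [← Matrix.mulVec_mulVec, Matrix.dotProduct_mulVec, star_trivial]
        rw [← Matrix.mulVec_transpose]
    -- goal quadratic form
    have hgoal : star x ⬝ᵥ ((c • (1 : Mat) - Aᵀ * A) *ᵥ x)
        = c * (x ⬝ᵥ x) - (A *ᵥ x) ⬝ᵥ (A *ᵥ x) := by
      rw [Matrix.sub_mulVec, dotProduct_sub]
      congr 1
      · rw [Matrix.smul_mulVec, Matrix.one_mulVec, dotProduct_smul, smul_eq_mul,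
          star_trivial]
      · rw [← Matrix.mulVec_mulVec, Matrix.dotProduct_mulVec, star_trivial]
        rw [← Matrix.mulVec_transpose, Matrix.transpose_transpose]
    rw [hgoal, sub_nonneg]
    set u := A *ᵥ x with hu
    set w := Aᵀ *ᵥ u with hw
    have h1 : w ⬝ᵥ w ≤ c * (u ⬝ᵥ u) := by
      have := h.dotProduct_mulVec_nonneg u
      rw [hq u] at this
      linarith
    have h2 : x ⬝ᵥ w = u ⬝ᵥ u := by
      rw [hw, Matrix.dotProduct_mulVec, Matrix.vecMul_transpose, ← hu]
    have hCS : (x ⬝ᵥ w) ^ 2 ≤ (x ⬝ᵥ x) * (w ⬝ᵥ w) := by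
      simpa [dotProduct, sq] using
        Finset.sum_mul_sq_le_sq_mul_sq Finset.univ x w
    have hu0 : 0 ≤ u ⬝ᵥ u := dot_self_nonneg u
    have hx0 : 0 ≤ x ⬝ᵥ x := dot_self_nonneg x
    rcases eq_or_lt_of_le hu0 with h0 | hpos
    · rw [← h0]; positivity
    · nlinarith [hCS, h1, h2.symm]

/-- B PSD with B² ⪰ a²I implies B ⪰ aI. -/
lemma psd_lower {B : Mat} {a : ℝ} (ha : 0 ≤ a) (hB : B.PosSemidef)
    (h : (B * B - a ^ 2 • (1 : Mat)).PosSemidef) :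
    (B - a • (1 : Mat)).PosSemidef := by
  classical
  have hH := hB.isHermitian
  have key : ∀ i, a ≤ hH.eigenvalues i := by
    intro i
    set μ := hH.eigenvalues i with hμ
    set v : Fin d → ℝ := ⇑(hH.eigenvectorBasis i) with hv
    have hBv : B *ᵥ v = μ • v := hH.mulVec_eigenvectorBasis i
    have hvne : v ≠ 0 := by
      have hne := hH.eigenvectorBasis.orthonormal.ne_zero i
      intro hcon
      apply hne
      ext j
      exact congrFun hcon j
    have hvv : 0 < v ⬝ᵥ v := by
      obtain ⟨j, hj⟩ := Function.ne_iff.mp hvne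
      refine Finset.sum_pos' (fun k _ => mul_self_nonneg _) ⟨j, Finset.mem_univ j, ?_⟩
      exact mul_self_pos.mpr hj
    have hq := h.dotProduct_mulVec_nonneg v
    rw [star_trivial] at hq
    have hcomp : (B * B - a ^ 2 • (1 : Mat)) *ᵥ v = (μ * μ - a ^ 2) • v := by
      rw [Matrix.sub_mulVec, ← Matrix.mulVec_mulVec, hBv, Matrix.mulVec_smul, hBv,
        Matrix.smul_mulVec, Matrix.one_mulVec, smul_smul, sub_smul]
    rw [hcomp, dotProduct_smul, smul_eq_mul] at hq
    have hμ2 : a ^ 2 ≤ μ * μ := by nlinarith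
    have hμ0 : 0 ≤ μ := hB.eigenvalues_nonneg i
    nlinarith
  -- reconstruct
  have hspec := hH.spectral_theorem
  rw [Unitary.conjStarAlgAut_apply] at hspec
  set U : Mat := (hH.eigenvectorUnitary : Mat) with hU
  have hUU : U * star U = 1 := Unitary.coe_mul_star_self hH.eigenvectorUnitary
  have hdiag : B - a • (1 : Mat)
      = U * (Matrix.diagonal (fun i => hH.eigenvalues i - a)) * star U := by
    have h1 : a • (1 : Mat) = U * (a • (1 : Mat)) * star U := by
      rw [mul_smul_comm, Matrix.mul_one, smul_mul_assoc, hUU]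
    calc B - a • (1 : Mat)
        = U * (Matrix.diagonal ((RCLike.ofReal : ℝ → ℝ) ∘ hH.eigenvalues)) * star U
          - U * (a • (1 : Mat)) * star U := by rw [← hspec, ← h1]
      _ = U * (Matrix.diagonal ((RCLike.ofReal : ℝ → ℝ) ∘ hH.eigenvalues) - a • (1 : Mat))
          * star U := by rw [← Matrix.sub_mul, ← Matrix.mul_sub]
      _ = _ := by
          congr 2
          rw [Matrix.smul_one_eq_diagonal, ← Matrix.diagonal_sub]
          congr 1
  rw [hdiag, Matrix.star_eq_conjTranspose]
  exact (Matrix.posSemidef_diagonal_iff.mpr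
    (fun i => sub_nonneg.mpr (key i))).mul_mul_conjTranspose_same U

lemma sandwich_expand (D X : Mat) (a : ℝ) :
    D * (X - a • (1 : Mat)) * D = D * X * D - a • (D * D) := by
  rw [Matrix.mul_sub, Matrix.sub_mul, mul_smul_comm, Matrix.mul_one, smul_mul_assoc]

lemma le_of_sq_le {a b : ℝ} (ha : 0 ≤ a) (hb : 0 ≤ b) (h : a ^ 2 ≤ b ^ 2) : a ≤ b := by
  nlinarith

lemma frob_triangle (X Y : Mat) : frobNorm (X + Y) ≤ frobNorm X + frobNorm Y := by
  apply le_of_sq_le (frob_nonneg _) (add_nonneg (frob_nonneg X) (frob_nonneg Y))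
  have hXY : ((X + Y)ᵀ * (X + Y)).trace
      = (Xᵀ * X).trace + (Xᵀ * Y).trace + ((Yᵀ * X).trace + (Yᵀ * Y).trace) := by
    rw [Matrix.transpose_add, Matrix.add_mul, Matrix.mul_add, Matrix.mul_add,
      Matrix.trace_add, Matrix.trace_add, Matrix.trace_add]
  rw [frob_sq, hXY, ← frob_sq, ← frob_sq]
  have c1 := trace_le_frob_mul_frob X Y
  have c2 := trace_le_frob_mul_frob Y X
  nlinarith [frob_nonneg X, frob_nonneg Y]

lemma main (σ₀ Sg : ℝ) (hσ₀ : 0 < σ₀) (hSg : σ₀ ≤ Sg)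
    (A A' : Mat)
    (hA1 : (A * Aᵀ - (2 * σ₀ ^ 2) • (1 : Mat)).PosSemidef)
    (hA2 : ((2 * Sg ^ 2) • (1 : Mat) - A * Aᵀ).PosSemidef)
    (hA1' : (A' * A'ᵀ - (2 * σ₀ ^ 2) • (1 : Mat)).PosSemidef)
    (hA2' : ((2 * Sg ^ 2) • (1 : Mat) - A' * A'ᵀ).PosSemidef)
    (B B' : Mat) (hB : B.PosSemidef)
    (hBeq : B * B = A * Aᵀ - σ₀ ^ 2 • (1 : Mat))
    (hB' : B'.PosSemidef)
    (hBeq' : B' * B' = A' * A'ᵀ - σ₀ ^ 2 • (1 : Mat)) :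
    frobNorm (B - B') ≤ (2 * Sg / σ₀) * frobNorm (A - A') := by
  have hSg0 : 0 < Sg := lt_of_lt_of_le hσ₀ hSg
  set D := B - B' with hD
  set E := A - A' with hE
  have hBt : Bᵀ = B := by rw [← conjT_eq_T]; exact hB.isHermitian
  have hB't : B'ᵀ = B' := by rw [← conjT_eq_T]; exact hB'.isHermitian
  have hDt : Dᵀ = D := by rw [hD, Matrix.transpose_sub, hBt, hB't]
  have hBsq : (B * B - σ₀ ^ 2 • (1 : Mat)).PosSemidef := by
    rw [hBeq]
    have heq : A * Aᵀ - σ₀ ^ 2 • (1 : Mat) - σ₀ ^ 2 • (1 : Mat)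
        = A * Aᵀ - (2 * σ₀ ^ 2) • (1 : Mat) := by
      rw [sub_sub, ← add_smul]
      norm_num
      ring_nf
    rw [heq]; exact hA1
  have hB'sq : (B' * B' - σ₀ ^ 2 • (1 : Mat)).PosSemidef := by
    rw [hBeq']
    have heq : A' * A'ᵀ - σ₀ ^ 2 • (1 : Mat) - σ₀ ^ 2 • (1 : Mat)
        = A' * A'ᵀ - (2 * σ₀ ^ 2) • (1 : Mat) := by
      rw [sub_sub, ← add_smul]
      norm_num
      ring_nf
    rw [heq]; exact hA1'
  have hBlow := psd_lower hσ₀.le hB hBsq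
  have hB'low := psd_lower hσ₀.le hB' hB'sq
  have t1 : σ₀ * (D * D).trace ≤ (D * B * D).trace := by
    have h0 : 0 ≤ (D * (B - σ₀ • (1 : Mat)) * D).trace := by
      have hP := hBlow.conjTranspose_mul_mul_same D
      rw [conjT_eq_T, hDt] at hP
      exact trace_nonneg_of_psd hP
    rw [sandwich_expand, Matrix.trace_sub, Matrix.trace_smul, smul_eq_mul, sub_nonneg] at h0
    exact h0
  have t2 : σ₀ * (D * D).trace ≤ (D * B' * D).trace := by
    have h0 : 0 ≤ (D * (B' - σ₀ • (1 : Mat)) * D).trace := by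
      have hP := hB'low.conjTranspose_mul_mul_same D
      rw [conjT_eq_T, hDt] at hP
      exact trace_nonneg_of_psd hP
    rw [sandwich_expand, Matrix.trace_sub, Matrix.trace_smul, smul_eq_mul, sub_nonneg] at h0
    exact h0
  have key1 : 2 * σ₀ * (D * D).trace ≤ (D * (B * B - B' * B')).trace := by
    have hsplit : D * (B * B - B' * B') = D * B * D + D * D * B' := by
      rw [hD]
      noncomm_ring
    have hcyc : (D * D * B').trace = (D * B' * D).trace :=
      (Matrix.trace_mul_cycle D B' D).symm
    rw [hsplit, Matrix.trace_add, hcyc]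
    linarith
  have key2 : (D * (B * B - B' * B')).trace
      ≤ frobNorm D * frobNorm (B * B - B' * B') := by
    have hcs := trace_le_frob_mul_frob D (B * B - B' * B')
    rwa [hDt] at hcs
  have hDD : (D * D).trace = frobNorm D ^ 2 := by rw [frob_sq, hDt]
  have hM2 : B * B - B' * B' = A * Eᵀ + E * A'ᵀ := by
    rw [hBeq, hBeq', hE, Matrix.transpose_sub]
    noncomm_ring
  have hAA : ((2 * Sg ^ 2) • (1 : Mat) - Aᵀ * A).PosSemidef :=
    transpose_loewner (by positivity) hA2
  have hAA' : ((2 * Sg ^ 2) • (1 : Mat) - A'ᵀ * A').PosSemidef :=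
    transpose_loewner (by positivity) hA2'
  have hEE : (E * Eᵀ).trace = frobNorm E ^ 2 := by rw [Matrix.trace_mul_comm, frob_sq]
  have hsqtarget : (Real.sqrt 2 * Sg * frobNorm E) ^ 2
      = 2 * Sg ^ 2 * frobNorm E ^ 2 := by
    rw [mul_pow, mul_pow, Real.sq_sqrt (by norm_num : (0:ℝ) ≤ 2)]
  have hrhs0 : 0 ≤ Real.sqrt 2 * Sg * frobNorm E :=
    mul_nonneg (mul_nonneg (Real.sqrt_nonneg 2) hSg0.le) (frob_nonneg E)
  have hb1 : frobNorm (A * Eᵀ) ≤ Real.sqrt 2 * Sg * frobNorm E := by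
    apply le_of_sq_le (frob_nonneg _) hrhs0
    have hsq : frobNorm (A * Eᵀ) ^ 2 = (E * (Aᵀ * A) * Eᵀ).trace := by
      rw [frob_sq, Matrix.transpose_mul, Matrix.transpose_transpose]
      congr 1
      noncomm_ring
    rw [hsq, hsqtarget]
    calc (E * (Aᵀ * A) * Eᵀ).trace ≤ (2 * Sg ^ 2) * (E * Eᵀ).trace :=
          trace_sandwich_le hAA E
      _ = 2 * Sg ^ 2 * frobNorm E ^ 2 := by rw [hEE]
  have hb2 : frobNorm (E * A'ᵀ) ≤ Real.sqrt 2 * Sg * frobNorm E := by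
    apply le_of_sq_le (frob_nonneg _) hrhs0
    have hsq : frobNorm (E * A'ᵀ) ^ 2 = (E * (A'ᵀ * A') * Eᵀ).trace := by
      rw [frob_sq, Matrix.trace_mul_comm, Matrix.transpose_mul, Matrix.transpose_transpose]
      congr 1
      noncomm_ring
    rw [hsq, hsqtarget]
    calc (E * (A'ᵀ * A') * Eᵀ).trace ≤ (2 * Sg ^ 2) * (E * Eᵀ).trace :=
          trace_sandwich_le hAA' E
      _ = 2 * Sg ^ 2 * frobNorm E ^ 2 := by rw [hEE]
  have htr : frobNorm (B * B - B' * B')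
      ≤ Real.sqrt 2 * Sg * frobNorm E + Real.sqrt 2 * Sg * frobNorm E := by
    rw [hM2]
    exact (frob_triangle _ _).trans (add_le_add hb1 hb2)
  rcases eq_or_lt_of_le (frob_nonneg D) with h0 | h0
  · rw [← h0]
    exact mul_nonneg (div_nonneg (by linarith) hσ₀.le) (frob_nonneg E)
  · have hstep : 2 * σ₀ * frobNorm D ≤ frobNorm (B * B - B' * B') := by
      have hc := key1.trans key2
      rw [hDD] at hc
      nlinarith [h0]
    rw [div_mul_eq_mul_div, le_div_iff₀ hσ₀]
    have hsqrt2 : Real.sqrt 2 ≤ 2 := by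
      nlinarith [Real.sq_sqrt (by norm_num : (0:ℝ) ≤ 2), Real.sqrt_nonneg 2]
    nlinarith [frob_nonneg E, hstep, htr, mul_nonneg hSg0.le (frob_nonneg E)]

end Stmt9Aux

open Stmt9Aux

/-- Lipschitz continuity of the map `A ↦ (AAᵀ − σ₀²I)^{1/2}` (square roots
being the unique positive semidefinite square roots), on the set of matrices with
`2σ₀² I ⪯ AAᵀ ⪯ 2Σ² I`; and the consequent Lipschitz bound for `σ̄ = (σσᵀ − σ₀²I)^{1/2}`
when `σ` is Lipschitz in Frobenius norm. -/
theorem stmt9 (d : ℕ) (σ₀ Sg : ℝ) (hσ₀ : 0 < σ₀) (hSg : σ₀ ≤ Sg) :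
    (∀ A A' : Matrix (Fin d) (Fin d) ℝ,
      loewnerLE ((2 * σ₀ ^ 2) • (1 : Matrix (Fin d) (Fin d) ℝ)) (A * Aᵀ) →
      loewnerLE (A * Aᵀ) ((2 * Sg ^ 2) • (1 : Matrix (Fin d) (Fin d) ℝ)) →
      loewnerLE ((2 * σ₀ ^ 2) • (1 : Matrix (Fin d) (Fin d) ℝ)) (A' * A'ᵀ) →
      loewnerLE (A' * A'ᵀ) ((2 * Sg ^ 2) • (1 : Matrix (Fin d) (Fin d) ℝ)) →
      ∀ B B' : Matrix (Fin d) (Fin d) ℝ,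
        B.PosSemidef → B * B = A * Aᵀ - σ₀ ^ 2 • (1 : Matrix (Fin d) (Fin d) ℝ) →
        B'.PosSemidef → B' * B' = A' * A'ᵀ - σ₀ ^ 2 • (1 : Matrix (Fin d) (Fin d) ℝ) →
        frobNorm (B - B') ≤ (2 * Sg / σ₀) * frobNorm (A - A')) ∧
    (∀ (L : ℝ) (σ : EuclideanSpace ℝ (Fin d) → Matrix (Fin d) (Fin d) ℝ),
      0 ≤ L →
      (∀ x y, frobNorm (σ x - σ y) ≤ L * dist x y) →
      (∀ x, loewnerLE ((2 * σ₀ ^ 2) • (1 : Matrix (Fin d) (Fin d) ℝ)) (σ x * (σ x)ᵀ) ∧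
            loewnerLE (σ x * (σ x)ᵀ) ((2 * Sg ^ 2) • (1 : Matrix (Fin d) (Fin d) ℝ))) →
      ∀ x y, ∀ B B' : Matrix (Fin d) (Fin d) ℝ,
        B.PosSemidef → B * B = σ x * (σ x)ᵀ - σ₀ ^ 2 • (1 : Matrix (Fin d) (Fin d) ℝ) →
        B'.PosSemidef → B' * B' = σ y * (σ y)ᵀ - σ₀ ^ 2 • (1 : Matrix (Fin d) (Fin d) ℝ) →
        frobNorm (B - B') ≤ (2 * Sg / σ₀) * L * dist x y) := by
  constructor
  · intro A A' h1 h2 h3 h4 B B' hB hBeq hB' hBeq'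
    exact main σ₀ Sg hσ₀ hSg A A' h1 h2 h3 h4 B B' hB hBeq hB' hBeq'
  · intro L σ hL hLip hbd x y B B' hB hBeq hB' hBeq'
    have h := main σ₀ Sg hσ₀ hSg (σ x) (σ y) (hbd x).1 (hbd x).2 (hbd y).1 (hbd y).2
      B B' hB hBeq hB' hBeq'
    have h2 : (2 * Sg / σ₀) * frobNorm (σ x - σ y) ≤ (2 * Sg / σ₀) * (L * dist x y) := by
      apply mul_le_mul_of_nonneg_left (hLip x y)
      have : (0:ℝ) < Sg := lt_of_lt_of_le hσ₀ hSg
      positivity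
    calc frobNorm (B - B') ≤ (2 * Sg / σ₀) * frobNorm (σ x - σ y) := h
      _ ≤ (2 * Sg / σ₀) * (L * dist x y) := h2
      _ = (2 * Sg / σ₀) * L * dist x y := by ring
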